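/- Let f : A → B, g : B → D, h : A → C, i : C → D be a commutative square of groupoids (with a specified natural isomorphism g∘f ≅ i∘h). The square is a 2-pullback (i.e. the induced functor A → C ×_D B to the pseudo-pullback groupoid is an equivalence) if and only if for every object b of B, the induced functor on homotopy fibers hofib_b(f) → hofib_{g(b)}(i) is an equivalence of groupoids. -/

import Mathlib

open CategoryTheory

section

variable {A B C D : Type*} [Groupoid A] [Groupoid B] [Groupoid C] [Groupoid D]

/-- The comparison functor from `A` to the pseudo-pullback groupoid
`C ×_D B` (realized as the comma category `Comma i g`, whose objects are triples
`(c, b, φ : i(c) ⟶ g(b))`), induced by a commutative square `g ∘ f ≅ i ∘ h`. -/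
def toPseudoPullback (f : A ⥤ B) (g : B ⥤ D) (h : A ⥤ C) (i : C ⥤ D)
    (α : f ⋙ g ≅ h ⋙ i) : A ⥤ Comma i g where
  obj a := ⟨h.obj a, f.obj a, α.inv.app a⟩
  map {a a'} ψ := ⟨h.map ψ, f.map ψ, (α.inv.naturality ψ)⟩

/-- The induced functor on homotopy fibers `hofib_b(f) → hofib_{g(b)}(i)`, where the
homotopy fiber of `f` at `b` is realized as the comma category
`Comma f (Functor.fromPUnit b)` (objects: pairs `(a, φ : f(a) ⟶ b)`). -/
def fiberMap (f : A ⥤ B) (g : B ⥤ D) (h : A ⥤ C) (i : C ⥤ D)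
    (α : f ⋙ g ≅ h ⋙ i) (b : B) :
    Comma f (Functor.fromPUnit b) ⥤ Comma i (Functor.fromPUnit (g.obj b)) where
  obj x := ⟨h.obj x.left, x.right, α.inv.app x.left ≫ g.map x.hom⟩
  map {x y} ψ :=
    ⟨h.map ψ.left, ψ.right, by
      have hn : i.map (h.map ψ.left) ≫ α.inv.app y.left =
          α.inv.app x.left ≫ g.map (f.map ψ.left) := α.inv.naturality ψ.left
      have hw : f.map ψ.left ≫ y.hom = x.hom := by
        simpa [Functor.fromPUnit] using ψ.w
      rw [← Category.assoc, hn, Category.assoc, ← g.map_comp, hw]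
      simp [Functor.fromPUnit]⟩

/-- **Cartesianity is detected on homotopy fibers.** A commutative square of
groupoids (with specified natural isomorphism `g ∘ f ≅ i ∘ h`) is a 2-pullback,
i.e. the comparison functor `A ⥤ C ×_D B` is an equivalence, if and only if for
every object `b` of `B` the induced functor on homotopy fibers
`hofib_b(f) ⥤ hofib_{g(b)}(i)` is an equivalence. -/
theorem stmt6 (f : A ⥤ B) (g : B ⥤ D) (h : A ⥤ C) (i : C ⥤ D)
    (α : f ⋙ g ≅ h ⋙ i) :
    (toPseudoPullback f g h i α).IsEquivalence ↔
      ∀ b : B, (fiberMap f g h i α b).IsEquivalence := by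
  set T := toPseudoPullback f g h i α with hT
  constructor
  · intro hTe b
    haveI := hTe
    set F := fiberMap f g h i α b with hF
    refine { faithful := ?_, full := ?_, essSurj := ?_ }
    · refine ⟨fun {x y} ψ ψ' hψ => ?_⟩
      have hl : h.map ψ.left = h.map ψ'.left := congrArg CommaMorphism.left hψ
      have hw : f.map ψ.left ≫ y.hom = x.hom := by simpa using ψ.w
      have hw' : f.map ψ'.left ≫ y.hom = x.hom := by simpa using ψ'.w
      have hfl : f.map ψ.left = f.map ψ'.left :=
        (cancel_mono y.hom).mp (hw.trans hw'.symm)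
      have hTm : T.map ψ.left = T.map ψ'.left := CommaMorphism.ext hl hfl
      exact CommaMorphism.ext (T.map_injective hTm) (Subsingleton.elim _ _)
    · refine ⟨fun {x y} m => ?_⟩
      have hm : i.map m.left ≫ (α.inv.app y.left ≫ g.map y.hom) =
          (α.inv.app x.left ≫ g.map x.hom) ≫ 𝟙 (g.obj b) := m.w
      have hw : i.map m.left ≫ α.inv.app y.left =
          α.inv.app x.left ≫ g.map (x.hom ≫ Groupoid.inv y.hom) := by
        have key : g.map (x.hom ≫ Groupoid.inv y.hom) ≫ g.map y.hom = g.map x.hom := by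
          rw [← g.map_comp, Category.assoc, Groupoid.inv_comp, Category.comp_id]
        refine (cancel_mono (g.map y.hom)).mp ?_
        exact (Category.assoc _ _ _).trans (hm.trans ((Category.comp_id _).trans
          ((congrArg (α.inv.app x.left ≫ ·) key).symm.trans (Category.assoc _ _ _).symm)))
      let m' : T.obj x.left ⟶ T.obj y.left :=
        ⟨m.left, x.hom ≫ Groupoid.inv y.hom, hw⟩
      obtain ⟨ψ, hψ⟩ := T.map_surjective m'
      have hψl : h.map ψ = m.left := congrArg CommaMorphism.left hψ
      have hψr : f.map ψ = x.hom ≫ Groupoid.inv y.hom := congrArg CommaMorphism.right hψ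
      refine ⟨⟨ψ, eqToHom (Subsingleton.elim _ _), ?_⟩, ?_⟩
      · simp [hψr]
      · exact CommaMorphism.ext hψl (Subsingleton.elim _ _)
    · refine ⟨fun y => ?_⟩
      let p : Comma i g := ⟨y.left, b, y.hom⟩
      let a := T.objPreimage p
      let e : T.obj a ≅ p := T.objObjPreimageIso p
      have hw : i.map e.hom.left ≫ y.hom = α.inv.app a ≫ g.map e.hom.right := e.hom.w
      refine ⟨⟨a, ⟨PUnit.unit⟩, e.hom.right⟩, ⟨?_⟩⟩
      refine Comma.isoMk (@asIso _ _ _ _ e.hom.left (IsIso.of_groupoid _)) (eqToIso (Subsingleton.elim _ _)) ?_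
      exact hw.trans (Category.comp_id _).symm
  · intro hFe
    refine { faithful := ?_, full := ?_, essSurj := ?_ }
    · refine ⟨fun {a a'} ψ ψ' hψ => ?_⟩
      haveI := hFe (f.obj a')
      set F := fiberMap f g h i α (f.obj a') with hF
      have hl : h.map ψ = h.map ψ' := congrArg CommaMorphism.left hψ
      have hr : f.map ψ = f.map ψ' := congrArg CommaMorphism.right hψ
      let x : Comma f (Functor.fromPUnit (f.obj a')) := ⟨a, ⟨PUnit.unit⟩, f.map ψ⟩
      let x' : Comma f (Functor.fromPUnit (f.obj a')) := ⟨a', ⟨PUnit.unit⟩, 𝟙 _⟩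
      let u : x ⟶ x' := ⟨ψ, 𝟙 _, by simp [x, x']⟩
      let u' : x ⟶ x' := ⟨ψ', 𝟙 _, by simp [x, x', hr]⟩
      have hFu : F.map u = F.map u' := CommaMorphism.ext hl (Subsingleton.elim _ _)
      exact congrArg CommaMorphism.left (F.map_injective hFu)
    · refine ⟨fun {a a'} m => ?_⟩
      haveI := hFe (f.obj a')
      set F := fiberMap f g h i α (f.obj a') with hF
      let x : Comma f (Functor.fromPUnit (f.obj a')) := ⟨a, ⟨PUnit.unit⟩, m.right⟩
      let x' : Comma f (Functor.fromPUnit (f.obj a')) := ⟨a', ⟨PUnit.unit⟩, 𝟙 _⟩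
      have hm : i.map m.left ≫ α.inv.app a' = α.inv.app a ≫ g.map m.right := m.w
      have hw : i.map m.left ≫ (α.inv.app a' ≫ g.map (𝟙 (f.obj a'))) =
          (α.inv.app a ≫ g.map m.right) ≫ 𝟙 (g.obj (f.obj a')) := by
        have e1 : α.inv.app a' ≫ g.map (𝟙 (f.obj a')) = α.inv.app a' := by
          rw [CategoryTheory.Functor.map_id]; exact Category.comp_id _
        have e2 : (α.inv.app a ≫ g.map m.right) ≫ 𝟙 (g.obj (f.obj a')) =
            α.inv.app a ≫ g.map m.right := Category.comp_id _
        exact (congrArg (i.map m.left ≫ ·) e1).trans (hm.trans e2.symm)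
      let n : F.obj x ⟶ F.obj x' := ⟨m.left, 𝟙 _, hw⟩
      obtain ⟨u, hu⟩ := F.map_surjective n
      have hul : h.map u.left = m.left := congrArg CommaMorphism.left hu
      have hur : f.map u.left ≫ 𝟙 (f.obj a') = m.right ≫ 𝟙 (f.obj a') := u.w
      refine ⟨u.left, CommaMorphism.ext hul ?_⟩
      show f.map u.left = m.right
      have hur' : f.map u.left = m.right ≫ 𝟙 (f.obj a') := (Category.comp_id _).symm.trans hur
      exact hur'.trans (Category.comp_id m.right)
    · refine ⟨fun p => ?_⟩
      haveI := hFe p.right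
      set F := fiberMap f g h i α p.right with hF
      let y : Comma i (Functor.fromPUnit (g.obj p.right)) := ⟨p.left, ⟨PUnit.unit⟩, p.hom⟩
      let x := F.objPreimage y
      let e : F.obj x ≅ y := F.objObjPreimageIso y
      have hw : i.map e.hom.left ≫ p.hom =
          (α.inv.app x.left ≫ g.map x.hom) ≫ 𝟙 (g.obj p.right) := e.hom.w
      refine ⟨x.left, ⟨Comma.isoMk (@asIso _ _ _ _ e.hom.left (IsIso.of_groupoid _))
        (@asIso _ _ _ _ x.hom (IsIso.of_groupoid _)) ?_⟩⟩
      show i.map e.hom.left ≫ p.hom = α.inv.app x.left ≫ g.map x.hom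
      simpa using hw

end
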